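/- Let a, b be real numbers with b ≠ 0, and define the Sontag feedback value v = -(a + √(a² + b⁴))/b. Then a + b·v = -√(a² + b⁴), and in particular a + b·v ≤ -b² < 0. -/

import Mathlib

/-- Sontag's universal formula (scalar case): with `a = L_fV`, `b = L_gV`, `b ≠ 0`,
the feedback `v = -(a + √(a² + b⁴))/b` yields closed-loop Lyapunov derivative
`a + b·v = -√(a² + b⁴) ≤ -b² < 0`. -/
theorem sontag_closed_loop_derivative (a b : ℝ) (hb : b ≠ 0)
    (v : ℝ) (hv : v = -(a + Real.sqrt (a ^ 2 + b ^ 4)) / b) :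
    a + b * v = -Real.sqrt (a ^ 2 + b ^ 4) ∧
      a + b * v ≤ -b ^ 2 ∧ -b ^ 2 < 0 := by
  have h1 : a + b * v = -Real.sqrt (a ^ 2 + b ^ 4) := by
    rw [hv]; field_simp; ring
  refine ⟨h1, ?_, by rw [neg_lt, neg_zero, ← sq_abs]; exact pow_pos (abs_pos.mpr hb) 2⟩
  rw [h1]
  have : b ^ 2 ≤ Real.sqrt (a ^ 2 + b ^ 4) := by
    rw [show a ^ 2 + b ^ 4 = a ^ 2 + (b ^ 2) ^ 2 by ring]
    calc b ^ 2 = Real.sqrt ((b ^ 2) ^ 2) := by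
          rw [Real.sqrt_sq (by positivity)]
      _ ≤ _ := Real.sqrt_le_sqrt (by nlinarith)
  linarith
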